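/- arXiv:1406.3597 — 2 statements merged into one kernel-verified Lean document; each statement's English description precedes it below -/
import Mathlib

section
/- Suppose nonnegative reals N_1,…,N_n and O_1,…,O_n (with n ≥ 2) satisfy: (i) ∑_{l=1}^{n} (n·H_l − l·H_n)·N_l ≤ ∑_{l=1}^{n} (l·H_{n−l} + (n−l)·H_l)·O_l, and (ii) ∑_{l=1}^{n} H_l·N_l ≤ ∑_{l=1}^{n} H_l·O_l. Then with x = (n − H_n)/(H_n − 1), we have ∑_{l=1}^{n} N_l ≤ [(n+x)/(n+x−H_n)]·H((n+x)/2) · ∑_{l=1}^{n} O_l. -/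
open MeasureTheory Finset Filter

noncomputable def harmonicR (n : ℕ) : ℝ := ∑ i ∈ Finset.range n, (1 : ℝ) / (i + 1)
noncomputable def Hext (k : ℝ) : ℝ := ∫ x in (0:ℝ)..1, (1 - x ^ k) / (1 - x)

noncomputable def fI (k : ℝ) : ℝ → ℝ := fun x => (1 - x ^ k) / (1 - x)

lemma hext_eq_set (k : ℝ) : Hext k = ∫ x in Set.Ioc (0:ℝ) 1, fI k x :=
  intervalIntegral.integral_of_le zero_le_one

lemma ae_ne_one : ∀ᵐ x : ℝ, x ≠ (1:ℝ) := by
  rw [MeasureTheory.ae_iff]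
  simp only [ne_eq, not_not, Set.setOf_eq_eq_singleton]
  exact Real.volume_singleton

lemma fI_meas (k : ℝ) : Measurable (fI k) := by
  unfold fI
  exact ((measurable_const.sub (measurable_id.pow_const k)).div
    (measurable_const.sub measurable_id))

lemma fI_one (k : ℝ) : fI k 1 = 0 := by
  simp [fI, Real.one_rpow]

lemma fI_nonneg {k x : ℝ} (hk : 0 ≤ k) (hx : x ∈ Set.Ioc (0:ℝ) 1) : 0 ≤ fI k x := by
  rcases eq_or_lt_of_le hx.2 with h1 | h1
  · rw [h1, fI_one]
  · exact div_nonneg (by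
      have := Real.rpow_le_one hx.1.le h1.le hk
      linarith) (by linarith)

lemma fI_mono {p q x : ℝ} (hpq : p ≤ q) (hx : x ∈ Set.Ioc (0:ℝ) 1) : fI p x ≤ fI q x := by
  rcases eq_or_lt_of_le hx.2 with h1 | h1
  · rw [h1, fI_one, fI_one]
  · have hxq : x ^ q ≤ x ^ p := Real.rpow_le_rpow_of_exponent_ge hx.1 h1.le hpq
    unfold fI
    have h2 : (0:ℝ) < 1 - x := by linarith
    exact div_le_div_of_nonneg_right (by linarith) h2.le

lemma fI_nat_eq {m : ℕ} {x : ℝ} (hx : x ≠ 1) :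
    fI (m : ℝ) x = ∑ i ∈ Finset.range m, x ^ i := by
  rw [fI, Real.rpow_natCast, geom_sum_eq hx, ← neg_sub (1:ℝ) (x^m), ← neg_sub (1:ℝ) x,
    neg_div_neg_eq]

lemma intOn_nat (m : ℕ) : IntegrableOn (fI (m : ℝ)) (Set.Ioc 0 1) := by
  have hc : IntegrableOn (fun x : ℝ => ∑ i ∈ Finset.range m, x ^ i) (Set.Ioc 0 1) := by
    apply Continuous.integrableOn_Ioc
    exact continuous_finset_sum _ fun i _ => continuous_pow i
  apply hc.congr_fun_ae
  filter_upwards [ae_restrict_of_ae ae_ne_one] with y hy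
  exact (fI_nat_eq hy).symm

lemma intOn (k : ℝ) (hk : 0 ≤ k) : IntegrableOn (fI k) (Set.Ioc 0 1) := by
  apply (intOn_nat ⌈k⌉₊).mono' ((fI_meas k).aestronglyMeasurable)
  filter_upwards [ae_restrict_mem measurableSet_Ioc] with y hy
  rw [Real.norm_eq_abs, abs_of_nonneg (fI_nonneg hk hy)]
  exact fI_mono (Nat.le_ceil k) hy

lemma Hext_nat (m : ℕ) : Hext (m : ℝ) = harmonicR m := by
  rw [Hext]
  have : (∫ x in (0:ℝ)..1, (1 - x ^ (m:ℝ)) / (1 - x)) =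
      ∫ x in (0:ℝ)..1, ∑ i ∈ Finset.range m, x ^ i := by
    apply intervalIntegral.integral_congr_ae
    filter_upwards [ae_ne_one] with y hy _
    exact fI_nat_eq hy
  rw [this, intervalIntegral.integral_finset_sum
    (fun i _ => (continuous_pow i).intervalIntegrable 0 1)]
  unfold harmonicR
  refine Finset.sum_congr rfl fun i _ => ?_
  rw [integral_pow]
  norm_num

lemma Hext_mono {p q : ℝ} (hp : 0 ≤ p) (hpq : p ≤ q) : Hext p ≤ Hext q := by
  rw [hext_eq_set, hext_eq_set]
  exact setIntegral_mono_on (intOn p hp) (intOn q (hp.trans hpq)) measurableSet_Ioc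
    fun y hy => fI_mono hpq hy

lemma fI_jensen {a b p q x : ℝ} (ha : 0 ≤ a) (hb : 0 ≤ b) (hab : 0 < a + b)
    (hx : x ∈ Set.Ioc (0:ℝ) 1) :
    a * fI p x + b * fI q x ≤ (a + b) * fI ((a * p + b * q) / (a + b)) x := by
  rcases eq_or_lt_of_le hx.2 with h1 | h1
  · rw [h1, fI_one, fI_one, fI_one]; simp
  · set m : ℝ := (a * p + b * q) / (a + b) with hm
    have hx0 : 0 < x := hx.1
    have key : (a + b) * x ^ m ≤ a * x ^ p + b * x ^ q := by
      have hw : a / (a + b) + b / (a + b) = 1 := by field_simp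
      have hmm : m = p * (a / (a+b)) + q * (b / (a+b)) := by
        rw [hm]; field_simp
      have hgm : (x ^ p) ^ (a/(a+b)) * (x ^ q) ^ (b/(a+b)) ≤
          (a/(a+b)) * x ^ p + (b/(a+b)) * x ^ q :=
        Real.geom_mean_le_arith_mean2_weighted (by positivity) (by positivity)
          (Real.rpow_nonneg hx0.le p) (Real.rpow_nonneg hx0.le q) hw
      have hxm : x ^ m = (x ^ p) ^ (a/(a+b)) * (x ^ q) ^ (b/(a+b)) := by
        rw [hmm, Real.rpow_add hx0, Real.rpow_mul hx0.le, Real.rpow_mul hx0.le]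
      rw [hxm]
      calc (a+b) * ((x ^ p) ^ (a/(a+b)) * (x ^ q) ^ (b/(a+b)))
          ≤ (a+b) * ((a/(a+b)) * x ^ p + (b/(a+b)) * x ^ q) := by
            exact mul_le_mul_of_nonneg_left hgm hab.le
        _ = a * x ^ p + b * x ^ q := by field_simp
    unfold fI
    have hd : (0:ℝ) < 1 - x := by linarith
    rw [← mul_div_assoc, ← mul_div_assoc, ← mul_div_assoc, ← add_div]
    exact div_le_div_of_nonneg_right (by nlinarith [key]) hd.le

lemma Hext_jensen {a b p q : ℝ} (ha : 0 ≤ a) (hb : 0 ≤ b) (hab : 0 < a + b)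
    (hp : 0 ≤ p) (hq : 0 ≤ q) :
    a * Hext p + b * Hext q ≤ (a + b) * Hext ((a * p + b * q) / (a + b)) := by
  have hm0 : 0 ≤ (a * p + b * q) / (a + b) := by positivity
  rw [hext_eq_set, hext_eq_set, hext_eq_set, ← integral_const_mul, ← integral_const_mul,
    ← integral_const_mul, ← integral_add ((intOn p hp).const_mul a) ((intOn q hq).const_mul b)]
  exact setIntegral_mono_on (((intOn p hp).const_mul a).add ((intOn q hq).const_mul b))
    ((intOn _ hm0).const_mul _) measurableSet_Ioc fun y hy => fI_jensen ha hb hab hy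

lemma harm_split (m : ℕ) : harmonicR (m+1) = (∑ i ∈ Finset.range m, (1:ℝ)/(i+2)) + 1 := by
  unfold harmonicR
  rw [Finset.sum_range_succ']
  push_cast
  norm_num
  apply Finset.sum_congr rfl
  intro i _
  ring

lemma harm_lb {l : ℕ} (hl : 1 ≤ l) : (l:ℝ) - 1 ≤ (l:ℝ) * (harmonicR l - 1) := by
  obtain ⟨m, rfl⟩ : ∃ m, l = m + 1 := ⟨l-1, by omega⟩
  rw [harm_split]
  have hm1 : (0:ℝ) < (m:ℝ) + 1 := by positivity
  have key : (m:ℝ) / ((m:ℝ)+1) ≤ ∑ i ∈ Finset.range m, (1:ℝ)/(i+2) := by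
    have hb : ∀ i ∈ Finset.range m, 1/((m:ℝ)+1) ≤ (1:ℝ)/(i+2) := by
      intro i hi
      have hi0 : i + 1 ≤ m := Finset.mem_range.mp hi
      have hi' : (i:ℝ) + 1 ≤ m := by exact_mod_cast hi0
      apply one_div_le_one_div_of_le (by positivity) (by linarith)
    have := Finset.card_nsmul_le_sum (Finset.range m) (fun i => (1:ℝ)/(i+2))
      (1/((m:ℝ)+1)) hb
    simpa [nsmul_eq_mul, div_eq_mul_inv] using this
  have h2 := mul_le_mul_of_nonneg_left key hm1.le
  rw [mul_div_cancel₀ _ (ne_of_gt hm1)] at h2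
  push_cast
  nlinarith [h2]

lemma harm_gap {l n : ℕ} (hln : l ≤ n) :
    ((l:ℝ)+1) * (harmonicR n - harmonicR l) ≤ (n:ℝ) - l := by
  have hl1 : (0:ℝ) < (l:ℝ) + 1 := by positivity
  have hsplit : harmonicR n = harmonicR l + ∑ i ∈ Finset.Ico l n, (1:ℝ)/(i+1) := by
    unfold harmonicR
    rw [Finset.range_eq_Ico,
      ← Finset.sum_Ico_consecutive _ (Nat.zero_le l) hln, Finset.range_eq_Ico]
  have key : ∑ i ∈ Finset.Ico l n, (1:ℝ)/(i+1) ≤ ((n:ℝ) - l) * (1/((l:ℝ)+1)) := by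
    have hb : ∀ i ∈ Finset.Ico l n, (1:ℝ)/(i+1) ≤ 1/((l:ℝ)+1) := by
      intro i hi
      have hi' : (l:ℝ) ≤ i := by exact_mod_cast (Finset.mem_Ico.mp hi).1
      apply one_div_le_one_div_of_le (by positivity) (by linarith)
    have := Finset.sum_le_card_nsmul (Finset.Ico l n) (fun i => (1:ℝ)/(i+1))
      (1/((l:ℝ)+1)) hb
    rw [Nat.card_Ico, nsmul_eq_mul, Nat.cast_sub hln] at this
    exact this
  have h2 := mul_le_mul_of_nonneg_left key hl1.le
  rw [hsplit]
  have : ((l:ℝ)+1) * (((n:ℝ) - l) * (1/((l:ℝ)+1))) = (n:ℝ) - l := by field_simp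
  nlinarith [h2]

lemma harm_mono {l n : ℕ} (hln : l ≤ n) : harmonicR l ≤ harmonicR n := by
  unfold harmonicR
  apply Finset.sum_le_sum_of_subset_of_nonneg (Finset.range_subset_range.2 hln)
  intro i _ _
  positivity

lemma harm_ge_one {l : ℕ} (hl : 1 ≤ l) : 1 ≤ harmonicR l := by
  have := harm_lb hl
  have hl' : (1:ℝ) ≤ l := by exact_mod_cast hl
  nlinarith

lemma harm_lt_self {n : ℕ} (hn : 2 ≤ n) : harmonicR n < n := by
  obtain ⟨m, rfl⟩ : ∃ m, n = m + 1 := ⟨n-1, by omega⟩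
  have hm : 1 ≤ m := by omega
  rw [harm_split]
  have key : ∑ i ∈ Finset.range m, (1:ℝ)/(i+2) ≤ (m:ℝ) * (1/2) := by
    have hb : ∀ i ∈ Finset.range m, (1:ℝ)/(i+2) ≤ 1/2 := by
      intro i hi
      have hi0 : (0:ℝ) ≤ i := Nat.cast_nonneg i
      apply one_div_le_one_div_of_le (by norm_num) (by linarith)
    have := Finset.sum_le_card_nsmul (Finset.range m) (fun i => (1:ℝ)/(i+2)) (1/2) hb
    simpa [nsmul_eq_mul] using this
  have hm' : (1:ℝ) ≤ m := by exact_mod_cast hm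
  push_cast
  nlinarith

lemma one_lt_harm {n : ℕ} (hn : 2 ≤ n) : 1 < harmonicR n := by
  have h1 := harm_lb (le_trans one_le_two hn)
  have hn' : (2:ℝ) ≤ n := by exact_mod_cast hn
  nlinarith

lemma coeff_left_aux {Hl Hn lr nr : ℝ} (hl1 : 1 ≤ lr) (hln : lr ≤ nr)
    (hF1 : lr - 1 ≤ lr * (Hl - 1)) (hF2 : (lr + 1) * (Hn - Hl) ≤ nr - lr)
    (hHlHn : Hl ≤ Hn) :
    (lr - 1) * (Hn - 1) ≤ (nr - 1) * (Hl - 1) := by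
  have hl0 : 0 < lr := by linarith
  have h1 : 0 ≤ lr - 1 := by linarith
  have h2 : 0 ≤ nr - lr := by linarith
  have hHl1 : 0 ≤ Hl - 1 := by nlinarith
  have hs : 0 ≤ Hn - Hl := by linarith
  nlinarith [mul_le_mul_of_nonneg_left hF1 (mul_nonneg h2 (by linarith : (0:ℝ) ≤ lr + 1)),
    mul_le_mul_of_nonneg_left hF2 (mul_nonneg h1 hl0.le),
    mul_nonneg h1 h2, mul_nonneg (mul_nonneg h1 h2) hl0.le]

theorem stmt13 (n : ℕ) (hn : 2 ≤ n) (N O : ℕ → ℝ)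
    (hN : ∀ l, 0 ≤ N l) (hO : ∀ l, 0 ≤ O l)
    (x : ℝ) (hx : x = ((n : ℝ) - harmonicR n) / (harmonicR n - 1))
    (h1 : ∑ l ∈ Finset.Icc 1 n, ((n : ℝ) * harmonicR l - (l : ℝ) * harmonicR n) * N l ≤
          ∑ l ∈ Finset.Icc 1 n, ((l : ℝ) * harmonicR (n - l) + ((n : ℝ) - (l : ℝ)) * harmonicR l) * O l)
    (h2 : ∑ l ∈ Finset.Icc 1 n, harmonicR l * N l ≤ ∑ l ∈ Finset.Icc 1 n, harmonicR l * O l) :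
    ∑ l ∈ Finset.Icc 1 n, N l ≤
      (((n : ℝ) + x) / (((n : ℝ) + x) - harmonicR n)) * Hext (((n : ℝ) + x) / 2) *
        ∑ l ∈ Finset.Icc 1 n, O l := by
  have hn' : (2:ℝ) ≤ n := by exact_mod_cast hn
  have hHn1 : 1 < harmonicR n := one_lt_harm hn
  have hHnn : harmonicR n < n := harm_lt_self hn
  have hHn0 : (0:ℝ) < harmonicR n := by linarith
  have hx0 : 0 < x := by
    rw [hx]; exact div_pos (by linarith) (by linarith)
  have hid : x * (harmonicR n - 1) = (n:ℝ) - harmonicR n := by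
    rw [hx, div_mul_cancel₀ _ (by intro h; rw [sub_eq_zero] at h; linarith : harmonicR n - 1 ≠ 0)]
  have hden : 0 < (n:ℝ) + x - harmonicR n := by nlinarith [mul_pos hx0 hHn0]
  -- Step A: combined inequality
  have hA : ∑ l ∈ Finset.Icc 1 n, (((n:ℝ) + x) * harmonicR l - (l:ℝ) * harmonicR n) * N l ≤
      ∑ l ∈ Finset.Icc 1 n,
        ((l:ℝ) * harmonicR (n - l) + (((n:ℝ) - (l:ℝ)) + x) * harmonicR l) * O l := by
    have h2' := mul_le_mul_of_nonneg_left h2 hx0.le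
    rw [Finset.mul_sum, Finset.mul_sum] at h2'
    have hsum := add_le_add h1 h2'
    rw [← Finset.sum_add_distrib, ← Finset.sum_add_distrib] at hsum
    calc ∑ l ∈ Finset.Icc 1 n, (((n:ℝ) + x) * harmonicR l - (l:ℝ) * harmonicR n) * N l
        = ∑ l ∈ Finset.Icc 1 n, (((n:ℝ) * harmonicR l - (l:ℝ) * harmonicR n) * N l
            + x * (harmonicR l * N l)) := Finset.sum_congr rfl fun l _ => by ring
      _ ≤ ∑ l ∈ Finset.Icc 1 n, (((l:ℝ) * harmonicR (n - l) + ((n:ℝ) - (l:ℝ)) * harmonicR l) * O l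
            + x * (harmonicR l * O l)) := hsum
      _ = _ := Finset.sum_congr rfl fun l _ => by ring
  -- Step B: lower bound on left coefficients
  have hB : ((n:ℝ) + x - harmonicR n) * ∑ l ∈ Finset.Icc 1 n, N l ≤
      ∑ l ∈ Finset.Icc 1 n, (((n:ℝ) + x) * harmonicR l - (l:ℝ) * harmonicR n) * N l := by
    rw [Finset.mul_sum]
    apply Finset.sum_le_sum
    intro l hl
    obtain ⟨hl1, hln⟩ := Finset.mem_Icc.mp hl
    apply mul_le_mul_of_nonneg_right ?_ (hN l)
    have hl1' : (1:ℝ) ≤ l := by exact_mod_cast hl1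
    have hln' : (l:ℝ) ≤ n := by exact_mod_cast hln
    have hF3 := coeff_left_aux hl1' hln' (harm_lb hl1) (harm_gap hln) (harm_mono hln)
    have hEq : ((n:ℝ) + x) * (harmonicR n - 1) = ((n:ℝ) - 1) * harmonicR n := by
      linear_combination hid
    have hHl1 : 1 ≤ harmonicR l := harm_ge_one hl1
    have hEq2 : ((n:ℝ) + x) * (harmonicR l - 1) * (harmonicR n - 1)
        = ((n:ℝ) - 1) * harmonicR n * (harmonicR l - 1) := by
      linear_combination (harmonicR l - 1) * hEq
    have hF3' := mul_le_mul_of_nonneg_right hF3 hHn0.le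
    nlinarith [hEq2, hF3', sub_pos.mpr hHn1]
  -- Step C: upper bound on right coefficients
  have hC : ∑ l ∈ Finset.Icc 1 n,
        ((l:ℝ) * harmonicR (n - l) + (((n:ℝ) - (l:ℝ)) + x) * harmonicR l) * O l ≤
      (((n:ℝ) + x) * Hext (((n:ℝ) + x) / 2)) * ∑ l ∈ Finset.Icc 1 n, O l := by
    rw [Finset.mul_sum]
    apply Finset.sum_le_sum
    intro l hl
    obtain ⟨hl1, hln⟩ := Finset.mem_Icc.mp hl
    apply mul_le_mul_of_nonneg_right ?_ (hO l)
    have hl1' : (1:ℝ) ≤ l := by exact_mod_cast hl1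
    have hln' : (l:ℝ) ≤ n := by exact_mod_cast hln
    have hcast : ((n - l : ℕ) : ℝ) = (n:ℝ) - l := by
      rw [Nat.cast_sub hln]
    have ha : (0:ℝ) ≤ l := by linarith
    have hb : (0:ℝ) ≤ ((n:ℝ) - l) + x := by linarith
    have hab : (0:ℝ) < (l:ℝ) + (((n:ℝ) - l) + x) := by linarith
    have hp : (0:ℝ) ≤ (n:ℝ) - l := by linarith
    have hjen := Hext_jensen (a := (l:ℝ)) (b := ((n:ℝ) - l) + x) (p := (n:ℝ) - l)
      (q := (l:ℝ)) ha hb hab hp ha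
    rw [← hcast, Hext_nat, Hext_nat, hcast] at hjen
    set m : ℝ := ((l:ℝ) * ((n:ℝ) - l) + (((n:ℝ) - l) + x) * l) / ((l:ℝ) + (((n:ℝ) - l) + x))
      with hm
    have hm0 : 0 ≤ m := by positivity
    have hmle : m ≤ ((n:ℝ) + x) / 2 := by
      rw [hm, div_le_div_iff₀ hab (by norm_num)]
      nlinarith [sq_nonneg ((n:ℝ) - 2 * l), mul_nonneg hx0.le hp, sq_nonneg x]
    have hmono := Hext_mono hm0 hmle
    have habeq : (l:ℝ) + (((n:ℝ) - l) + x) = (n:ℝ) + x := by ring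
    calc (l:ℝ) * harmonicR (n - l) + (((n:ℝ) - l) + x) * harmonicR l
        ≤ ((l:ℝ) + (((n:ℝ) - l) + x)) * Hext m := hjen
      _ ≤ ((l:ℝ) + (((n:ℝ) - l) + x)) * Hext (((n:ℝ) + x) / 2) := by
          apply mul_le_mul_of_nonneg_left hmono (by linarith)
      _ = ((n:ℝ) + x) * Hext (((n:ℝ) + x) / 2) := by rw [habeq]
  -- combine
  have hmain := hB.trans (hA.trans hC)
  rw [div_mul_eq_mul_div, div_mul_eq_mul_div, le_div_iff₀ hden]
  nlinarith [hmain]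
end

section
/- For every positive integer n ≥ 2, (n + x)/(n + x − H_n) · H((n+x)/2) < H_n, where x = (n − H_n)/(H_n − 1) — equivalently, the new upper bound on the price of stability is strictly smaller than H_n for all sufficiently large n, with the gap approaching log 2. -/
open MeasureTheory Finset Filter


lemma harmonicR_eq (n : ℕ) : harmonicR n = (harmonic n : ℝ) := by
  unfold harmonicR harmonic
  push_cast
  simp [one_div]

lemma log_lt_half (y : ℝ) (hy : 1 < y) : Real.log y < (y - y⁻¹)/2 := by
  have h0 : 0 < Real.log y := Real.log_pos hy
  have := Real.self_lt_sinh_iff.mpr h0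
  rwa [Real.sinh_log (by linarith)] at this

lemma harmonic_lb (n : ℕ) (hn : 1 ≤ n) :
    Real.log n + 1/2 + 1/(2*n) ≤ harmonicR n := by
  induction n with
  | zero => omega
  | succ m ih =>
    rcases Nat.eq_or_lt_of_le hn with h | h
    · simp [← h, harmonicR]
      norm_num
    · have hm : 1 ≤ m := by omega
      have ihm := ih hm
      have hm0 : (0:ℝ) < m := by positivity
      have hstep : Real.log (m+1) ≤ Real.log m + 1/(2*m) + 1/(2*(m+1)) := by
        have hy : (1:ℝ) < (m+1)/m := by
          rw [lt_div_iff₀ hm0]; linarith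
        have h1 := log_lt_half _ hy
        rw [Real.log_div (by linarith) (ne_of_gt hm0)] at h1
        have h2 : (((m:ℝ)+1)/m - (((m:ℝ)+1)/m)⁻¹)/2 = 1/(2*m) + 1/(2*(m+1)) := by
          rw [inv_div]
          field_simp
          ring
        rw [h2] at h1
        linarith
      have hsucc : harmonicR (m+1) = harmonicR m + 1/(m+1) := by
        unfold harmonicR
        rw [Finset.sum_range_succ]
      rw [hsucc]
      push_cast
      have hpos : (0:ℝ) < (m:ℝ)+1 := by positivity
      have : 1/(2*((m:ℝ)+1)) + 1/(2*((m:ℝ)+1)) = 1/((m:ℝ)+1) := by field_simp; norm_num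
      linarith

lemma harmonicR_lb (n : ℕ) (hn : 1 ≤ n) : Real.log n + 1/2 ≤ harmonicR n := by
  have := harmonic_lb n hn
  have : (0:ℝ) < 1/(2*n) := by positivity
  linarith [harmonic_lb n hn]

lemma harmonicR_ub (n : ℕ) : harmonicR n ≤ 1 + Real.log n := by
  rw [harmonicR_eq]; exact harmonic_le_one_add_log n

lemma hext_le (k : ℝ) (hk : 1 ≤ k) : Hext k ≤ Real.log k + 1 := by
  have hk0 : (0:ℝ) < k := by linarith
  set f : ℝ → ℝ := fun x => (1 - x ^ k) / (1 - x) with hf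
  set a : ℝ := 1 - 1/k with ha
  have hk1 : 1/k ≤ 1 := by rw [div_le_one hk0]; exact hk
  have hkpos : 0 < 1/k := by positivity
  have ha0 : 0 ≤ a := by rw [ha]; linarith
  have ha1 : a < 1 := by rw [ha]; linarith
  have hb1 : ∀ x : ℝ, 0 ≤ x → x ≤ 1 → f x ≤ k := by
    intro x hx0 hx1
    rcases eq_or_lt_of_le hx1 with rfl | hx1'
    · simp [hf, Real.one_rpow]; linarith
    · have hxpos : 0 < 1 - x := by linarith
      have hbern : 1 + k * (x - 1) ≤ x ^ k := by
        have := one_add_mul_self_le_rpow_one_add (s := x - 1) (by linarith) hk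
        simpa using this
      rw [hf, div_le_iff₀ hxpos]
      nlinarith
  have hb0 : ∀ x : ℝ, 0 ≤ x → x ≤ 1 → 0 ≤ f x := by
    intro x hx0 hx1
    rcases eq_or_lt_of_le hx1 with rfl | hx1'
    · simp [hf]
    · have hxpos : 0 < 1 - x := by linarith
      apply div_nonneg _ (le_of_lt hxpos)
      have : x ^ k ≤ 1 := Real.rpow_le_one hx0 (le_of_lt hx1') (le_of_lt hk0)
      linarith
  have hmeas : Measurable f := by
    apply Measurable.div
    · exact ((Real.continuous_rpow_const (le_of_lt hk0)).measurable).const_sub 1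
    · exact measurable_id.const_sub 1
  have hint : IntervalIntegrable f volume 0 1 := by
    apply IntervalIntegrable.mono_fun' (g := fun _ => k) intervalIntegrable_const
      hmeas.aestronglyMeasurable
    filter_upwards [ae_restrict_mem measurableSet_uIoc] with x hx
    rw [Set.uIoc_of_le (by norm_num : (0:ℝ) ≤ 1)] at hx
    have h0 : 0 ≤ x := le_of_lt hx.1
    have h1 : x ≤ 1 := hx.2
    simp only [Real.norm_eq_abs, abs_of_nonneg (hb0 x h0 h1)]
    exact hb1 x h0 h1
  have hsub1 : Set.uIcc (0:ℝ) a ⊆ Set.uIcc (0:ℝ) 1 := by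
    rw [Set.uIcc_of_le ha0, Set.uIcc_of_le (by norm_num : (0:ℝ) ≤ 1)]
    exact Set.Icc_subset_Icc le_rfl (le_of_lt ha1)
  have hsub2 : Set.uIcc a (1:ℝ) ⊆ Set.uIcc (0:ℝ) 1 := by
    rw [Set.uIcc_of_le (le_of_lt ha1), Set.uIcc_of_le (by norm_num : (0:ℝ) ≤ 1)]
    exact Set.Icc_subset_Icc ha0 le_rfl
  have hint1 : IntervalIntegrable f volume 0 a := hint.mono_set hsub1
  have hint2 : IntervalIntegrable f volume a 1 := hint.mono_set hsub2
  have hsplit : Hext k = (∫ x in (0:ℝ)..a, f x) + ∫ x in a..(1:ℝ), f x := by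
    rw [Hext, ← intervalIntegral.integral_add_adjacent_intervals hint1 hint2]
  -- first piece
  have hg_int : IntervalIntegrable (fun x => (1 - x)⁻¹) volume 0 a := by
    apply ContinuousOn.intervalIntegrable
    apply ContinuousOn.inv₀ (by fun_prop)
    intro x hx
    rw [Set.uIcc_of_le ha0] at hx
    have := hx.2
    intro h; nlinarith [ha1]
  have hI1 : (∫ x in (0:ℝ)..a, f x) ≤ ∫ x in (0:ℝ)..a, (1 - x)⁻¹ := by
    apply intervalIntegral.integral_mono_on ha0 hint1 hg_int
    intro x hx
    have hx0 := hx.1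
    have hx1 : x < 1 := lt_of_le_of_lt hx.2 ha1
    have hxpos : 0 < 1 - x := by linarith
    rw [hf]
    rw [div_le_iff₀ hxpos, inv_mul_cancel₀ (ne_of_gt hxpos)]
    have : 0 ≤ x ^ k := Real.rpow_nonneg hx0 k
    linarith
  have hI1' : (∫ x in (0:ℝ)..a, (1 - x)⁻¹) = Real.log k := by
    have hFTC : ∀ x ∈ Set.uIcc (0:ℝ) a, HasDerivAt (fun y => -Real.log (1 - y)) ((1 - x)⁻¹) x := by
      intro x hx
      rw [Set.uIcc_of_le ha0] at hx
      have hxpos : 0 < 1 - x := by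
        have := hx.2; nlinarith [ha1]
      have h1 : HasDerivAt (fun y : ℝ => 1 - y) (-1) x := by
        simpa using (hasDerivAt_id x).const_sub 1
      have h2 := (Real.hasDerivAt_log (ne_of_gt hxpos)).comp x h1
      have h3 := h2.neg
      exact h3.congr_deriv (by ring)
    rw [intervalIntegral.integral_eq_sub_of_hasDerivAt hFTC hg_int]
    have h1a : (1:ℝ) - a = 1/k := by rw [ha]; ring
    rw [h1a]
    simp [Real.log_div, Real.log_inv, one_div]
  have hI2 : (∫ x in a..(1:ℝ), f x) ≤ ∫ x in a..(1:ℝ), k := by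
    apply intervalIntegral.integral_mono_on (le_of_lt ha1) hint2 intervalIntegrable_const
    intro x hx
    exact hb1 x (le_trans ha0 hx.1) hx.2
  have hI2' : (∫ x in a..(1:ℝ), (k:ℝ)) = 1 := by
    rw [intervalIntegral.integral_const, smul_eq_mul]
    rw [ha]; field_simp; ring
  rw [hsplit]
  have := hI1.trans (le_of_eq hI1')
  linarith [hI2.trans (le_of_eq hI2')]


set_option maxHeartbeats 1000000 in
theorem stmt19 : ∃ N : ℕ, 2 ≤ N ∧ ∀ n : ℕ, N ≤ n →
    (((n : ℝ) + ((n : ℝ) - harmonicR n) / (harmonicR n - 1)) /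
        (((n : ℝ) + ((n : ℝ) - harmonicR n) / (harmonicR n - 1)) - harmonicR n)) *
      Hext (((n : ℝ) + ((n : ℝ) - harmonicR n) / (harmonicR n - 1)) / 2) < harmonicR n := by
  refine ⟨3486784401, by norm_num, ?_⟩
  intro n hn
  have hnR : (3486784401:ℝ) ≤ (n:ℝ) := by exact_mod_cast hn
  have hn0 : (0:ℝ) < n := by linarith
  set H : ℝ := harmonicR n with hH
  set L : ℝ := Real.log n with hL
  -- L ≥ 20
  have hL20 : 20 ≤ L := by
    rw [hL, Real.le_log_iff_exp_le hn0]
    have h1 : Real.exp 20 = Real.exp 1 ^ (20:ℕ) := by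
      rw [Real.exp_one_pow]; norm_num
    have h2 : Real.exp 1 ^ (20:ℕ) ≤ (2.7182818286:ℝ) ^ (20:ℕ) :=
      pow_le_pow_left₀ (le_of_lt (Real.exp_pos 1)) (le_of_lt Real.exp_one_lt_d9) 20
    have h3 : (2.7182818286:ℝ) ^ (20:ℕ) ≤ 3486784401 := by norm_num
    linarith [h1 ▸ (h2.trans h3)]
  -- q := n^(1/4)
  set q : ℝ := (n:ℝ) ^ ((4:ℕ):ℝ)⁻¹ with hq
  have hq4 : q ^ (4:ℕ) = (n:ℝ) := Real.rpow_inv_natCast_pow (le_of_lt hn0) (by norm_num)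
  have hq243 : (243:ℝ) ≤ q := by
    have : ((243:ℝ) ^ (4:ℕ)) ^ (((4:ℕ):ℝ)⁻¹) ≤ (n:ℝ) ^ (((4:ℕ):ℝ)⁻¹) := by
      apply Real.rpow_le_rpow (by positivity) (by norm_num; linarith) (by norm_num)
    rwa [Real.pow_rpow_inv_natCast (by norm_num) (by norm_num)] at this
  have hq0 : (0:ℝ) < q := by linarith
  have hLq : L ≤ 4 * q := by
    have h1 : L = 4 * Real.log q := by
      rw [hL, ← hq4, Real.log_pow]; push_cast; ring
    have h2 : Real.log q ≤ q - 1 := Real.log_le_sub_one_of_pos hq0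
    nlinarith
  have hHl : L + 1/2 ≤ H := by
    rw [hH, hL]; exact harmonicR_lb n (by omega)
  have hHu : H ≤ 1 + L := by rw [hH, hL]; exact harmonicR_ub n
  have hH1 : (1:ℝ) < H := by linarith
  have hHn : H < (n:ℝ) := by
    have hq2 : (59049:ℝ) ≤ q*q := by nlinarith
    have hq4b : (59049:ℝ)*(q*q) ≤ q^4 := by
      nlinarith [mul_le_mul_of_nonneg_right hq2 (mul_self_nonneg q)]
    have : H ≤ 1 + 4*q := by linarith
    nlinarith [hq4, hq243, hq0]
  have hnH : (0:ℝ) < (n:ℝ) - H := by linarith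
  have hH1' : H - 1 ≠ 0 := by intro h; nlinarith
  have hH1p : (0:ℝ) < H - 1 := by linarith
  -- the argument
  set aa : ℝ := H * ((n:ℝ) - 1) / (2 * (H - 1)) with haa
  have haa1 : (1:ℝ) ≤ aa := by
    rw [haa, le_div_iff₀ (by positivity)]
    nlinarith
  -- rewrite expression
  have E1 : (n:ℝ) + ((n:ℝ) - H) / (H - 1) = H * ((n:ℝ) - 1) / (H - 1) := by
    field_simp; ring
  have E2 : ((n:ℝ) + ((n:ℝ) - H) / (H - 1)) / 2 = aa := by
    rw [E1, haa, div_div, mul_comm (H-1) 2]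
  have E3 : ((n:ℝ) + ((n:ℝ) - H) / (H - 1)) /
      (((n:ℝ) + ((n:ℝ) - H) / (H - 1)) - H) = ((n:ℝ) - 1) / ((n:ℝ) - H) := by
    rw [E1]
    rw [div_eq_div_iff]
    · field_simp; ring
    · have : H * ((n:ℝ) - 1) / (H - 1) - H = H * ((n:ℝ) - H) / (H - 1) := by
        field_simp; ring
      rw [this]; positivity
    · positivity
  rw [E2, E3]
  -- bound log aa
  have hc2 := Real.log_two_gt_d9
  have hlogaa : Real.log aa ≤ L - Real.log 2 + 1/19 := by
    have hsplit : aa = (((n:ℝ) - 1)/2) * (H/(H-1)) := by rw [haa]; field_simp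
    have hpos1 : (0:ℝ) < ((n:ℝ)-1)/2 := by nlinarith
    have hpos2 : (0:ℝ) < H/(H-1) := by positivity
    rw [hsplit, Real.log_mul (ne_of_gt hpos1) (ne_of_gt hpos2)]
    have hb1 : Real.log (((n:ℝ)-1)/2) ≤ L - Real.log 2 := by
      rw [Real.log_div (ne_of_gt (by linarith : (0:ℝ) < (n:ℝ)-1)) (by norm_num)]
      have : Real.log ((n:ℝ)-1) ≤ L := by
        rw [hL]; exact Real.log_le_log (by linarith) (by linarith)
      linarith
    have hb2 : Real.log (H/(H-1)) ≤ 1/19 := by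
      have h1 : Real.log (H/(H-1)) ≤ H/(H-1) - 1 := Real.log_le_sub_one_of_pos hpos2
      have h2 : H/(H-1) - 1 = 1/(H-1) := by field_simp; ring
      have h3 : 1/(H-1) ≤ 1/19 := by
        apply div_le_div_of_nonneg_left (by norm_num) (by norm_num) (by linarith)
      linarith
    linarith
  have hHextA : Hext aa ≤ L + (1 - Real.log 2 + 1/19) :=
    (hext_le aa haa1).trans (by linarith)
  -- final chain
  have hpre : (0:ℝ) ≤ ((n:ℝ) - 1) / ((n:ℝ) - H) := div_nonneg (by linarith) (by linarith)
  have step1 : ((n:ℝ) - 1) / ((n:ℝ) - H) * Hext aa ≤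
      ((n:ℝ) - 1) / ((n:ℝ) - H) * (L + (1 - Real.log 2 + 1/19)) :=
    mul_le_mul_of_nonneg_left hHextA hpre
  have key : ((n:ℝ) - 1) * (L + (1 - Real.log 2 + 1/19)) < H * ((n:ℝ) - H) := by
    set c : ℝ := 1 - Real.log 2 + 1/19 with hc
    have hcb : c ≤ 0.36 := by rw [hc]; norm_num; linarith
    have hc0 : 0 < c := by rw [hc]; nlinarith [Real.log_two_lt_d9]
    have h25 : (L + 1/2) * (L + 1) ≤ 25 * q^2 := by nlinarith [sq_nonneg (q-1)]
    have hn59 : (59049:ℝ) * q^2 ≤ (n:ℝ) := by nlinarith [hq4, hq243, sq_nonneg q]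
    have hq2 : (59049:ℝ) ≤ q^2 := by nlinarith
    have hnc : 0.14 * (n:ℝ) ≤ (1/2 - c) * (n:ℝ) := by nlinarith
    have h8 : 25*q^2 + 21 ≤ 0.14*(n:ℝ) := by nlinarith
    have hmid : ((n:ℝ) - 1) * (L + c) < (L + 1/2) * ((n:ℝ) - 1 - L) := by
      nlinarith [h25, hnc, h8, hc0, hL20]
    have hfin : (L + 1/2) * ((n:ℝ) - 1 - L) ≤ H * ((n:ℝ) - H) := by
      apply mul_le_mul hHl (by linarith) (by nlinarith) (by linarith)
    exact hmid.trans_le hfin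
  have step2 : ((n:ℝ) - 1) / ((n:ℝ) - H) * (L + (1 - Real.log 2 + 1/19)) < H := by
    rw [div_mul_eq_mul_div, div_lt_iff₀ hnH]
    linarith [key]
  linarith
end
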